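/- arXiv:1801.00105 — 2 statements merged into one kernel-verified Lean document; each statement's English description precedes it below -/
import Mathlib

section
/- Let Φ and φ denote the standard normal CDF and density. For z → ∞ and δ₁ = δ₁(z) ∈ (0,1) with δ₁ = (1-Φ(z))^{1/8}, we have z^{δ₁} (1 - Φ(z√(1-δ₁))) / (1 - Φ(z))^{1-δ₁} → 1 as z → ∞. -/
open MeasureTheory ProbabilityTheory Filter Real

open Set

/-- Standard normal CDF. -/
noncomputable def Phi : ℝ → ℝ := fun x => ProbabilityTheory.cdf (gaussianReal 0 1) x

/-- Standard normal quantile function. -/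
noncomputable def PhiInv : ℝ → ℝ := fun q => sInf {x | q ≤ Phi x}

noncomputable def phiR (x : ℝ) : ℝ := (Real.sqrt (2*π))⁻¹ * Real.exp (-x^2/2)

lemma phiR_pos (x : ℝ) : 0 < phiR x := by unfold phiR; positivity

lemma hasDerivAt_phiR (x : ℝ) : HasDerivAt phiR (-x * phiR x) x := by
  have h : HasDerivAt (fun t : ℝ => -t^2/2) (-x) x := by
    have := ((hasDerivAt_pow 2 x).div_const 2).neg
    simpa [neg_div, Pi.neg_def] using this
  have := (h.exp).const_mul ((Real.sqrt (2*π))⁻¹)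
  refine this.congr_deriv ?_
  unfold phiR; ring

lemma continuous_phiR : Continuous phiR := by
  unfold phiR; fun_prop

lemma integrable_phiR : Integrable phiR := by
  have := (integrable_exp_neg_mul_sq (by norm_num : (0:ℝ) < 1/2)).const_mul
    ((Real.sqrt (2*π))⁻¹)
  refine this.congr (Eventually.of_forall fun x => ?_)
  unfold phiR; ring_nf

lemma tendsto_phiR : Tendsto phiR atTop (nhds 0) := by
  have h1 : Tendsto (fun x : ℝ => -x^2/2) atTop atBot := by
    apply Tendsto.atBot_div_const (by norm_num)
    exact tendsto_neg_atBot_iff.mpr (tendsto_pow_atTop two_ne_zero)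
  have := (Real.tendsto_exp_atBot.comp h1).const_mul ((Real.sqrt (2*π))⁻¹)
  simpa [Function.comp] using (this.congr fun x => by simp [Function.comp, phiR])

lemma integrable_mul_phiR (z : ℝ) : IntegrableOn (fun t => t * phiR t) (Ioi z) := by
  have := (integrable_mul_exp_neg_mul_sq (by norm_num : (0:ℝ) < 1/2)).const_mul
    ((Real.sqrt (2*π))⁻¹)
  refine (this.congr (Eventually.of_forall fun x => ?_)).integrableOn
  unfold phiR; ring_nf

lemma integral_mul_phiR {z : ℝ} : ∫ t in Ioi z, t * phiR t = phiR z := by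
  have := integral_Ioi_of_hasDerivAt_of_tendsto (f := fun t => -phiR t)
    (f' := fun t => t * phiR t) (a := z) (m := 0)
    (continuous_phiR.neg.continuousWithinAt)
    (fun x _ => by have := (hasDerivAt_phiR x).neg; simp only [neg_mul, neg_neg] at this; exact this)
    (integrable_mul_phiR z) (by simpa using tendsto_phiR.neg)
  simpa using this

noncomputable def psi (t : ℝ) : ℝ := phiR t * ((t^4+2*t^2-1)/(t^2+1)^2)

lemma hasDerivAt_G (x : ℝ) :
    HasDerivAt (fun t => -(phiR t * (t/(t^2+1)))) (psi x) x := by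
  have hd : HasDerivAt (fun t : ℝ => t/(t^2+1)) ((1*(x^2+1) - x*(2*x))/((x^2+1)^2)) x := by
    have h1 : HasDerivAt (fun t : ℝ => t) 1 x := hasDerivAt_id x
    have h2 : HasDerivAt (fun t : ℝ => t^2+1) (2*x) x := by
      simpa using (hasDerivAt_pow 2 x).add_const 1
    exact h1.div h2 (by positivity)
  have := ((hasDerivAt_phiR x).mul hd).neg
  refine this.congr_deriv ?_
  unfold psi
  have hne : (x^2+1 : ℝ) ≠ 0 := by positivity
  field_simp
  ring

lemma psi_le (t : ℝ) : psi t ≤ phiR t := by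
  unfold psi
  nth_rewrite 2 [← mul_one (phiR t)]
  refine mul_le_mul_of_nonneg_left ?_ (phiR_pos t).le
  rw [div_le_one (by positivity)]
  nlinarith [sq_nonneg t, sq_nonneg (t^2)]

lemma abs_psi_le (t : ℝ) : |psi t| ≤ phiR t := by
  unfold psi
  rw [abs_mul, abs_of_pos (phiR_pos t)]
  nth_rewrite 2 [← mul_one (phiR t)]
  refine mul_le_mul_of_nonneg_left ?_ (phiR_pos t).le
  rw [abs_div, abs_of_pos (a := (t^2+1)^2) (by positivity), div_le_one (by positivity),
    abs_le]
  constructor <;> nlinarith [sq_nonneg t, sq_nonneg (t^2)]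

lemma continuous_psi : Continuous psi := by
  unfold psi
  exact continuous_phiR.mul (Continuous.div (by fun_prop) (by fun_prop)
    (fun x => by positivity))

lemma integrable_psi (z : ℝ) : IntegrableOn psi (Ioi z) := by
  refine Integrable.mono integrable_phiR.integrableOn
    continuous_psi.aestronglyMeasurable.restrict
    (Eventually.of_forall fun t => ?_)
  rw [Real.norm_eq_abs, Real.norm_eq_abs, abs_of_pos (phiR_pos t)]
  exact abs_psi_le t

lemma tendsto_G : Tendsto (fun t : ℝ => -(phiR t * (t/(t^2+1)))) atTop (nhds 0) := by
  have h : Tendsto (fun t : ℝ => phiR t * (t/(t^2+1))) atTop (nhds 0) := by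
    refine tendsto_of_tendsto_of_tendsto_of_le_of_le' tendsto_const_nhds tendsto_phiR
      ?_ ?_
    · filter_upwards [eventually_ge_atTop (0:ℝ)] with t ht
      exact mul_nonneg (phiR_pos t).le (by positivity)
    · filter_upwards [eventually_ge_atTop (0:ℝ)] with t ht
      nth_rewrite 2 [← mul_one (phiR t)]
      refine mul_le_mul_of_nonneg_left ?_ (phiR_pos t).le
      rw [div_le_one (by positivity)]
      nlinarith
  simpa using h.neg

lemma integral_psi {z : ℝ} : ∫ t in Ioi z, psi t = phiR z * (z/(z^2+1)) := by
  have := integral_Ioi_of_hasDerivAt_of_tendsto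
    (f := fun t => -(phiR t * (t/(t^2+1)))) (f' := psi) (a := z) (m := 0)
    ((continuous_phiR.mul (Continuous.div (by fun_prop) (by fun_prop)
      (fun x => by positivity))).neg.continuousWithinAt)
    (fun x _ => hasDerivAt_G x) (integrable_psi z) tendsto_G
  simpa using this

lemma Q_eq (z : ℝ) : 1 - Phi z = ∫ t in Set.Ioi z, phiR t := by
  have h1 : Phi z = ((gaussianReal 0 1) (Set.Iic z)).toReal := cdf_eq_real _ z
  have h2 : (gaussianReal 0 1) (Set.Iic z) + (gaussianReal 0 1) (Set.Ioi z) = 1 := by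
    rw [← measure_union (by simp) measurableSet_Ioi]
    simp [Set.Iic_union_Ioi]
  have h3 : (gaussianReal 0 1) (Set.Ioi z)
      = ENNReal.ofReal (∫ x in Set.Ioi z, gaussianPDFReal 0 1 x) :=
    gaussianReal_apply_eq_integral 0 one_ne_zero _
  have h4 : ∫ x in Set.Ioi z, gaussianPDFReal 0 1 x = ∫ t in Set.Ioi z, phiR t := by
    refine setIntegral_congr_fun measurableSet_Ioi (fun x _ => ?_)
    simp [gaussianPDFReal, phiR]
  have h5 := congrArg ENNReal.toReal h2
  rw [ENNReal.toReal_add (measure_ne_top _ _) (measure_ne_top _ _)] at h5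
  have h6 : ((gaussianReal 0 1) (Set.Ioi z)).toReal = ∫ t in Set.Ioi z, phiR t := by
    rw [h3, ENNReal.toReal_ofReal
      (setIntegral_nonneg measurableSet_Ioi (fun x _ => gaussianPDFReal_nonneg 0 1 x)), h4]
  simp only [ENNReal.toReal_one] at h5
  rw [h1, ← h6]
  linarith

lemma mills_upper {x : ℝ} (hx : 0 < x) : 1 - Phi x ≤ phiR x / x := by
  rw [Q_eq]
  have h1 : ∫ t in Ioi x, phiR t ≤ ∫ t in Ioi x, (t * phiR t) / x := by
    refine setIntegral_mono_on integrable_phiR.integrableOn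
      ((integrable_mul_phiR x).div_const x) measurableSet_Ioi (fun t ht => ?_)
    rw [le_div_iff₀ hx]
    have : x ≤ t := (le_of_lt ht)
    nlinarith [phiR_pos t]
  calc ∫ t in Ioi x, phiR t ≤ ∫ t in Ioi x, (t * phiR t) / x := h1
    _ = (∫ t in Ioi x, t * phiR t) / x := by rw [integral_div]
    _ = phiR x / x := by rw [integral_mul_phiR]

lemma mills_lower {x : ℝ} (hx : 0 < x) : phiR x * (x/(x^2+1)) ≤ 1 - Phi x := by
  rw [Q_eq, ← integral_psi]
  refine setIntegral_mono_on (integrable_psi x) integrable_phiR.integrableOn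
    measurableSet_Ioi (fun t _ => psi_le t)

noncomputable def δf (z : ℝ) : ℝ := (1 - Phi z) ^ (8⁻¹ : ℝ)
noncomputable def wf (z : ℝ) : ℝ := z * Real.sqrt (1 - δf z)

lemma log_phiR (t : ℝ) : Real.log (phiR t) = -(Real.log (2*π)/2) - t^2/2 := by
  unfold phiR
  rw [Real.log_mul (by positivity) (exp_ne_zero _), Real.log_inv,
    Real.log_sqrt (by positivity), Real.log_exp]
  ring

lemma Qf_pos {z : ℝ} (hz : 0 < z) : 0 < 1 - Phi z :=
  lt_of_lt_of_le (by have := phiR_pos z; positivity) (mills_lower hz)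

lemma delta_pos {z : ℝ} (hz : 0 < z) : 0 < δf z := Real.rpow_pos_of_pos (Qf_pos hz) _

lemma tendsto_Qf : Tendsto (fun z => 1 - Phi z) atTop (nhds 0) := by
  have h := tendsto_cdf_atTop (gaussianReal 0 1)
  have : Tendsto (fun z => 1 - Phi z) atTop (nhds (1-1)) := tendsto_const_nhds.sub h
  simpa using this

lemma tendsto_delta : Tendsto δf atTop (nhds 0) := by
  have := tendsto_Qf.rpow_const (p := (8⁻¹:ℝ)) (Or.inr (by norm_num))
  unfold δf
  simpa [δf, Real.zero_rpow] using this

lemma eventually_hyp : ∀ᶠ z : ℝ in atTop, 2 ≤ z ∧ δf z ≤ 1/2 := by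
  filter_upwards [eventually_ge_atTop (2:ℝ),
    tendsto_delta.eventually_le_const (by norm_num : (0:ℝ) < 1/2) |>.mono (fun _ h => h)]
    with z h1 h2
  exact ⟨h1, h2⟩

lemma tendsto_logaux : Tendsto (fun z : ℝ => Real.log (z^2+1) - 2*Real.log z)
    atTop (nhds 0) := by
  have h1 : Tendsto (fun z : ℝ => (z^2+1)/z^2) atTop (nhds 1) := by
    have h2 : Tendsto (fun z : ℝ => 1 + (z^2)⁻¹) atTop (nhds (1 + 0)) :=
      tendsto_const_nhds.add
        (tendsto_inv_atTop_zero.comp (tendsto_pow_atTop two_ne_zero))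
    rw [add_zero] at h2
    refine h2.congr' ?_
    filter_upwards [eventually_gt_atTop (0:ℝ)] with z hz
    field_simp
  have h3 : Tendsto (fun z : ℝ => Real.log ((z^2+1)/z^2)) atTop (nhds 0) := by
    have := (Real.continuousAt_log one_ne_zero).tendsto.comp h1
    simpa [Function.comp_def] using this
  refine h3.congr' ?_
  filter_upwards [eventually_gt_atTop (0:ℝ)] with z hz
  rw [Real.log_div (by positivity) (by positivity), Real.log_pow]
  push_cast; ring

lemma tendsto_log_one_sub_delta : Tendsto (fun z => Real.log (1 - δf z)) atTop (nhds 0) := by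
  have h : Tendsto (fun z => 1 - δf z) atTop (nhds 1) := by
    have := ((tendsto_const_nhds : Tendsto (fun _ : ℝ => (1:ℝ)) atTop (nhds 1)).sub tendsto_delta)
    simpa using this
  have := (Real.continuousAt_log one_ne_zero).tendsto.comp h
  simpa [Function.comp_def] using this

lemma tendsto_A : Tendsto
    (fun z => z ^ δf z * (phiR (wf z) / wf z) / (phiR z * (z/(z^2+1))) ^ (1 - δf z))
    atTop (nhds 1) := by
  set a : ℝ → ℝ := fun z => (1 - δf z)*(Real.log (z^2+1) - 2*Real.log z)
    - δf z*(Real.log (2*π)/2) - Real.log (1 - δf z)/2 with ha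
  have hta : Tendsto a atTop (nhds 0) := by
    have := (((((tendsto_const_nhds : Tendsto (fun _ : ℝ => (1:ℝ)) atTop (nhds 1)).sub tendsto_delta)).mul tendsto_logaux).sub
      (tendsto_delta.mul_const (Real.log (2*π)/2))).sub
      (tendsto_log_one_sub_delta.div_const 2)
    simpa using this
  have hexp : Tendsto (fun z => Real.exp (a z)) atTop (nhds 1) := by
    have := Real.tendsto_exp_nhds_zero_nhds_one.comp hta
    simpa [Function.comp_def] using this
  refine hexp.congr' ?_
  filter_upwards [eventually_hyp] with z ⟨hz2, hd2⟩
  have hz0 : (0:ℝ) < z := by linarith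
  have hd0 : 0 < δf z := delta_pos hz0
  have hd1 : (0:ℝ) < 1 - δf z := by linarith
  have hw0 : 0 < wf z := mul_pos hz0 (Real.sqrt_pos.mpr hd1)
  have hw2 : (wf z)^2 = z^2*(1 - δf z) := by
    rw [wf, mul_pow, Real.sq_sqrt hd1.le]
  have hlogw : Real.log (wf z) = Real.log z + Real.log (1 - δf z)/2 := by
    rw [wf, Real.log_mul hz0.ne' (Real.sqrt_pos.mpr hd1).ne', Real.log_sqrt hd1.le]
  have hden : (0:ℝ) < phiR z * (z/(z^2+1)) :=
    mul_pos (phiR_pos z) (div_pos hz0 (by positivity))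
  have hApos : 0 < z ^ δf z * (phiR (wf z) / wf z) / (phiR z * (z/(z^2+1))) ^ (1 - δf z) :=
    div_pos (mul_pos (Real.rpow_pos_of_pos hz0 _) (div_pos (phiR_pos _) hw0))
      (Real.rpow_pos_of_pos hden _)
  rw [← Real.exp_log hApos]
  congr 1
  rw [Real.log_div (mul_pos (Real.rpow_pos_of_pos hz0 _)
      (div_pos (phiR_pos _) hw0)).ne' (Real.rpow_pos_of_pos hden _).ne',
    Real.log_mul (Real.rpow_pos_of_pos hz0 _).ne' (div_pos (phiR_pos _) hw0).ne',
    Real.log_rpow hz0, Real.log_div (phiR_pos _).ne' hw0.ne',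
    Real.log_rpow hden, Real.log_mul (phiR_pos z).ne' (div_pos hz0 (by positivity)).ne',
    Real.log_div hz0.ne' (by positivity : ((z:ℝ)^2+1) ≠ 0),
    log_phiR, log_phiR, hw2, hlogw, ha]
  ring

lemma tendsto_logaux2 : Tendsto
    (fun z : ℝ => Real.log (z^2*(1 - δf z)+1) - 2*Real.log z) atTop (nhds 0) := by
  have hq : Tendsto (fun z : ℝ => (1 - δf z) + (z^2)⁻¹) atTop (nhds 1) := by
    have := (((tendsto_const_nhds : Tendsto (fun _ : ℝ => (1:ℝ)) atTop (nhds 1)).sub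
      tendsto_delta).add (tendsto_inv_atTop_zero.comp (tendsto_pow_atTop two_ne_zero)))
    simpa [Function.comp] using this
  have hq2 : Tendsto (fun z : ℝ => Real.log ((1 - δf z) + (z^2)⁻¹)) atTop (nhds 0) := by
    have := (Real.continuousAt_log one_ne_zero).tendsto.comp hq
    simpa [Function.comp_def] using this
  refine hq2.congr' ?_
  filter_upwards [eventually_hyp] with z ⟨hz2, hd2⟩
  have hz0 : (0:ℝ) < z := by linarith
  have hd1 : (0:ℝ) < 1 - δf z := by have := delta_pos hz0; linarith
  have hX : (0:ℝ) < z^2*(1 - δf z)+1 := by positivity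
  have harg : (1 - δf z) + (z^2)⁻¹ = (z^2*(1 - δf z)+1)/(z^2) := by field_simp
  rw [harg, Real.log_div hX.ne' (by positivity), Real.log_pow]
  push_cast; ring

lemma tendsto_B : Tendsto
    (fun z => z ^ δf z * (phiR (wf z) * (wf z/((wf z)^2+1))) / (phiR z / z) ^ (1 - δf z))
    atTop (nhds 1) := by
  set b : ℝ → ℝ := fun z => -(Real.log (z^2*(1 - δf z)+1) - 2*Real.log z)
    + Real.log (1 - δf z)/2 - δf z*(Real.log (2*π)/2) with hb
  
  have htb : Tendsto b atTop (nhds 0) := by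
    have := (tendsto_logaux2.neg.add (tendsto_log_one_sub_delta.div_const 2)).sub
      (tendsto_delta.mul_const (Real.log (2*π)/2))
    rw [show (-0 + 0/2 - 0*(Real.log (2*π)/2) : ℝ) = 0 by norm_num] at this
    exact this
  have hexp : Tendsto (fun z => Real.exp (b z)) atTop (nhds 1) := by
    have := Real.tendsto_exp_nhds_zero_nhds_one.comp htb
    simpa [Function.comp_def] using this
  refine hexp.congr' ?_
  filter_upwards [eventually_hyp] with z ⟨hz2, hd2⟩
  have hz0 : (0:ℝ) < z := by linarith
  have hd0 : 0 < δf z := delta_pos hz0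
  have hd1 : (0:ℝ) < 1 - δf z := by linarith
  have hw0 : 0 < wf z := mul_pos hz0 (Real.sqrt_pos.mpr hd1)
  have hw2 : (wf z)^2 = z^2*(1 - δf z) := by
    rw [wf, mul_pow, Real.sq_sqrt hd1.le]
  have hlogw : Real.log (wf z) = Real.log z + Real.log (1 - δf z)/2 := by
    rw [wf, Real.log_mul hz0.ne' (Real.sqrt_pos.mpr hd1).ne', Real.log_sqrt hd1.le]
  have hden : (0:ℝ) < phiR z / z := div_pos (phiR_pos z) hz0
  have hw1 : (0:ℝ) < (wf z)^2+1 := by positivity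
  have hnum : (0:ℝ) < phiR (wf z) * (wf z/((wf z)^2+1)) :=
    mul_pos (phiR_pos _) (div_pos hw0 hw1)
  have hBpos : 0 < z ^ δf z * (phiR (wf z) * (wf z/((wf z)^2+1))) / (phiR z / z) ^ (1 - δf z) :=
    div_pos (mul_pos (Real.rpow_pos_of_pos hz0 _) hnum) (Real.rpow_pos_of_pos hden _)
  rw [← Real.exp_log hBpos]
  congr 1
  rw [Real.log_div (mul_pos (Real.rpow_pos_of_pos hz0 _) hnum).ne'
      (Real.rpow_pos_of_pos hden _).ne',
    Real.log_mul (Real.rpow_pos_of_pos hz0 _).ne' hnum.ne',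
    Real.log_rpow hz0,
    Real.log_mul (phiR_pos _).ne' (div_pos hw0 hw1).ne',
    Real.log_div hw0.ne' hw1.ne',
    Real.log_rpow hden, Real.log_div (phiR_pos z).ne' hz0.ne',
    log_phiR, log_phiR, hw2, hlogw, hb]
  ring

theorem stmt2 :
    Tendsto (fun z : ℝ =>
        z ^ ((1 - Phi z) ^ (8⁻¹ : ℝ))
          * (1 - Phi (z * Real.sqrt (1 - (1 - Phi z) ^ (8⁻¹ : ℝ))))
          / (1 - Phi z) ^ (1 - (1 - Phi z) ^ (8⁻¹ : ℝ)))
      atTop (nhds 1) := by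
  refine tendsto_of_tendsto_of_tendsto_of_le_of_le' tendsto_B tendsto_A ?_ ?_
  · filter_upwards [eventually_hyp] with z ⟨hz2, hd2⟩
    show _ ≤ z ^ δf z * (1 - Phi (wf z)) / (1 - Phi z) ^ (1 - δf z)
    have hz0 : (0:ℝ) < z := by linarith
    have hd0 : 0 < δf z := delta_pos hz0
    have hd1 : (0:ℝ) < 1 - δf z := by linarith
    have hw0 : 0 < wf z := mul_pos hz0 (Real.sqrt_pos.mpr hd1)
    have hQz : 0 < 1 - Phi z := Qf_pos hz0
    have hQw : 0 < 1 - Phi (wf z) := Qf_pos hw0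
    have hzp : (0:ℝ) < z ^ δf z := Real.rpow_pos_of_pos hz0 _
    refine div_le_div₀ (by positivity)
      (mul_le_mul_of_nonneg_left (mills_lower hw0) hzp.le)
      (Real.rpow_pos_of_pos hQz _)
      (Real.rpow_le_rpow hQz.le (mills_upper hz0) hd1.le)
  · filter_upwards [eventually_hyp] with z ⟨hz2, hd2⟩
    show z ^ δf z * (1 - Phi (wf z)) / (1 - Phi z) ^ (1 - δf z) ≤ _
    have hz0 : (0:ℝ) < z := by linarith
    have hd0 : 0 < δf z := delta_pos hz0
    have hd1 : (0:ℝ) < 1 - δf z := by linarith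
    have hw0 : 0 < wf z := mul_pos hz0 (Real.sqrt_pos.mpr hd1)
    have hQz : 0 < 1 - Phi z := Qf_pos hz0
    have hQw : 0 < 1 - Phi (wf z) := Qf_pos hw0
    have hzp : (0:ℝ) < z ^ δf z := Real.rpow_pos_of_pos hz0 _
    have hden : (0:ℝ) < phiR z * (z/(z^2+1)) :=
      mul_pos (phiR_pos z) (div_pos hz0 (by positivity))
    refine div_le_div₀ (by have := phiR_pos (wf z); positivity)
      (mul_le_mul_of_nonneg_left (mills_upper hw0) hzp.le)
      (Real.rpow_pos_of_pos hden _)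
      (Real.rpow_le_rpow hden.le (mills_lower hz0) hd1.le)
end

section
/- Let α ∈ (0,1), β = 1/8, u_p = 0.5(1-(1-α)^{1/p}), and c(p) = Φ^{-1}(1 - u_p). If p = p(n) → ∞ with p(n) = O(n^{2-δ}) for some δ > 0, then 2p(1 - Φ(c(p)·√(1 - u_p^β))) → -ln(1-α) as n → ∞. -/
open MeasureTheory ProbabilityTheory Filter Real Set

noncomputable def phi (x : ℝ) : ℝ := (Real.sqrt (2 * Real.pi))⁻¹ * Real.exp (-x^2/2)

set_option linter.unusedSectionVars false
set_option linter.unusedVariables false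



lemma phi_eq : phi = gaussianPDFReal 0 1 := by
  ext x
  simp [phi, gaussianPDFReal, NNReal.coe_one]


lemma phi_pos (x : ℝ) : 0 < phi x := by
  rw [phi_eq]; exact gaussianPDFReal_pos 0 1 x one_ne_zero

lemma phi_cont : Continuous phi := by
  unfold phi; continuity

lemma phi_integrable : Integrable phi := by
  rw [phi_eq]; exact integrable_gaussianPDFReal 0 1

lemma phi_integral : ∫ x, phi x = 1 := by
  rw [phi_eq]; exact integral_gaussianPDFReal_eq_one 0 one_ne_zero

lemma Phi_eq (x : ℝ) : Phi x = ∫ t in Iic x, phi t := by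
  rw [Phi, cdf_eq_real, measureReal_def, gaussianReal_apply_eq_integral 0 one_ne_zero,
    ENNReal.toReal_ofReal]
  · rw [phi_eq]
  · exact setIntegral_nonneg measurableSet_Iic fun t _ =>
      gaussianPDFReal_nonneg 0 1 t

lemma Phi_sub_eq (a b : ℝ) (hab : a ≤ b) :
    Phi b - Phi a = ∫ t in a..b, phi t := by
  have h := setIntegral_union (Iic_disjoint_Ioc (le_refl a)) measurableSet_Ioc
      (phi_integrable.integrableOn (s := Iic a)) (phi_integrable.integrableOn (s := Ioc a b))
  rw [Iic_union_Ioc_eq_Iic hab] at h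
  rw [Phi_eq, Phi_eq, intervalIntegral.integral_of_le hab, h]
  ring

lemma one_sub_Phi (x : ℝ) : 1 - Phi x = ∫ t in Ioi x, phi t := by
  have h := setIntegral_union (Iic_disjoint_Ioi (le_refl x)) measurableSet_Ioi
      (phi_integrable.integrableOn (s := Iic x)) (phi_integrable.integrableOn (s := Ioi x))
  rw [Iic_union_Ioi] at h
  rw [Phi_eq, ← phi_integral, ← setIntegral_univ, h]
  ring

lemma Phi_strictMono : StrictMono Phi := by
  intro a b hab
  have : 0 < ∫ t in a..b, phi t :=
    intervalIntegral.intervalIntegral_pos_of_pos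
      phi_integrable.intervalIntegrable (fun x => phi_pos x) hab
  linarith [Phi_sub_eq a b hab.le]

lemma Phi_continuous : Continuous Phi := by
  have h : ∀ x : ℝ, Phi x = Phi 0 + ∫ t in (0:ℝ)..x, phi t := by
    intro x
    rcases le_total 0 x with h | h
    · rw [← Phi_sub_eq 0 x h]; ring
    · rw [intervalIntegral.integral_symm, ← Phi_sub_eq x 0 h]; ring
  rw [funext h]
  exact continuous_const.add
    (intervalIntegral.continuous_primitive (fun a b => phi_integrable.intervalIntegrable) 0)

lemma Phi_tendsto_atTop : Tendsto Phi atTop (nhds 1) := tendsto_cdf_atTop _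
lemma Phi_tendsto_atBot : Tendsto Phi atBot (nhds 0) := tendsto_cdf_atBot _

lemma Phi_lt_one (x : ℝ) : Phi x < 1 := by
  have := one_sub_Phi x
  have hpos : 0 < ∫ t in Ioi x, phi t :=
    setIntegral_pos_iff_support_of_nonneg_ae
      (Filter.Eventually.of_forall fun t => (phi_pos t).le)
      (phi_integrable.integrableOn) |>.2
      (by
        have : (Function.support phi) = univ := by
          ext t; simp [Function.support, (phi_pos t).ne']
        rw [this, univ_inter]
        simp [Real.volume_Ioi])
  linarith

lemma Phi_pos' (x : ℝ) : 0 < Phi x := by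
  rw [Phi_eq]
  refine setIntegral_pos_iff_support_of_nonneg_ae
      (Filter.Eventually.of_forall fun t => (phi_pos t).le)
      (phi_integrable.integrableOn) |>.2 ?_
  have : (Function.support phi) = univ := by
    ext t; simp [Function.support, (phi_pos t).ne']
  rw [this, univ_inter]
  simp [Real.volume_Iic]

lemma PhiInv_spec {q : ℝ} (hq0 : 0 < q) (hq1 : q < 1) : Phi (PhiInv q) = q := by
  obtain ⟨a, ha⟩ : ∃ a, Phi a < q := by
    rcases (Phi_tendsto_atBot.eventually (eventually_lt_nhds hq0)).exists with ⟨a, ha⟩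
    exact ⟨a, ha⟩
  obtain ⟨b, hb⟩ : ∃ b, q < Phi b := by
    rcases (Phi_tendsto_atTop.eventually (eventually_gt_nhds hq1)).exists with ⟨b, hb⟩
    exact ⟨b, hb⟩
  have hab : a ≤ b := by
    by_contra h
    exact absurd (Phi_strictMono (lt_of_not_ge h)) (by linarith)
  obtain ⟨x, _, hx⟩ := intermediate_value_Icc hab (Phi_continuous.continuousOn) 
    ⟨ha.le, hb.le⟩
  have hset : {y | q ≤ Phi y} = Ici x := by
    ext y
    simp only [mem_setOf_eq, mem_Ici]
    constructor
    · intro h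
      by_contra hy
      exact absurd (Phi_strictMono (lt_of_not_ge hy)) (by rw [hx] at *; linarith)
    · intro h
      rw [← hx]; exact Phi_strictMono.monotone h
  rw [PhiInv]
  simp only [hset, csInf_Ici]
  exact hx

lemma phi_hasDerivAt (x : ℝ) : HasDerivAt phi (-x * phi x) x := by
  have h1 : HasDerivAt (fun t : ℝ => -t^2/2) (-x) x := by
    have := ((hasDerivAt_pow 2 x).neg.div_const 2)
    refine this.congr_deriv ?_
    norm_num
    ring
  have h3 := ((Real.hasDerivAt_exp (-x^2/2)).comp x h1).const_mul (Real.sqrt (2 * Real.pi))⁻¹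
  have hval : -x * phi x = (Real.sqrt (2 * Real.pi))⁻¹ * (Real.exp (-x^2/2) * -x) := by
    unfold phi; ring
  rw [hval]
  exact h3

lemma phi_tendsto_atTop : Tendsto phi atTop (nhds 0) := by
  have h : Tendsto (fun x : ℝ => -x^2/2) atTop atBot := by
    apply Tendsto.atBot_div_const two_pos
    exact Filter.tendsto_neg_atBot_iff.2 (tendsto_pow_atTop two_ne_zero)
  have h2 := (Real.tendsto_exp_atBot.comp h).const_mul (Real.sqrt (2 * Real.pi))⁻¹
  rw [mul_zero] at h2
  exact h2

lemma neg_phi_tendsto : Tendsto (fun t => -phi t) atTop (nhds 0) := by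
  simpa using phi_tendsto_atTop.neg

lemma neg_phi_hasDerivAt (x : ℝ) : HasDerivAt (fun t => -phi t) (x * phi x) x := by
  have := (phi_hasDerivAt x).neg; simp only [neg_mul, neg_neg] at this; exact this

lemma integral_mul_phi {x : ℝ} (hx : 0 ≤ x) : ∫ t in Ioi x, t * phi t = phi x := by
  have := integral_Ioi_of_hasDerivAt_of_nonneg' (g := fun t => -phi t)
    (g' := fun t => t * phi t) (a := x) (l := 0)
    (fun t _ => neg_phi_hasDerivAt t)
    (fun t ht => mul_nonneg (hx.trans (le_of_lt ht)) (phi_pos t).le)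
    neg_phi_tendsto
  simpa using this

lemma integrable_mul_phi {x : ℝ} (hx : 0 ≤ x) : IntegrableOn (fun t => t * phi t) (Ioi x) := by
  exact integrableOn_Ioi_deriv_of_nonneg' (fun t _ => neg_phi_hasDerivAt t)
    (fun t ht => mul_nonneg (hx.trans (le_of_lt ht)) (phi_pos t).le)
    neg_phi_tendsto

/-- Upper Gaussian tail bound. -/
lemma tail_upper {x : ℝ} (hx : 0 < x) : 1 - Phi x ≤ phi x / x := by
  rw [one_sub_Phi]
  have hmono : ∫ t in Ioi x, phi t ≤ ∫ t in Ioi x, (t/x) * phi t := by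
    apply setIntegral_mono_on phi_integrable.integrableOn
    · have h := (integrable_mul_phi hx.le).div_const x
      exact h.congr (Filter.Eventually.of_forall fun t => by ring)
    · exact measurableSet_Ioi
    · intro t ht
      have : 1 ≤ t / x := (one_le_div hx).2 (le_of_lt ht)
      nlinarith [phi_pos t]
  calc (∫ t in Ioi x, phi t) ≤ ∫ t in Ioi x, (t/x) * phi t := hmono
    _ = (∫ t in Ioi x, t * phi t) / x := by
        rw [← integral_div]
        congr 1; ext t; ring
    _ = phi x / x := by rw [integral_mul_phi hx.le]

noncomputable def gg (t : ℝ) : ℝ := -(t * phi t / (1 + t^2))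
noncomputable def ww (t : ℝ) : ℝ := phi t * (t^4 + 2*t^2 - 1) / (1+t^2)^2

lemma gg_hasDerivAt (x : ℝ) : HasDerivAt gg (ww x) x := by
  have hd : (1 + x^2) ≠ 0 := by positivity
  have hnum := (hasDerivAt_id x).mul (phi_hasDerivAt x)
  have hden : HasDerivAt (fun t : ℝ => 1 + t^2) (2*x) x := by
    simpa using (hasDerivAt_pow 2 x).const_add 1
  have := (hnum.div hden hd).neg
  unfold gg
  refine this.congr_deriv ?_
  unfold ww
  field_simp
  simp only [Pi.mul_apply, id_eq]
  ring

lemma gg_tendsto : Tendsto gg atTop (nhds 0) := by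
  have h1 : ∀ᶠ t : ℝ in atTop, -phi t ≤ gg t := by
    filter_upwards [eventually_ge_atTop (0:ℝ)] with t ht
    unfold gg
    rw [neg_le_neg_iff]
    rw [div_le_iff₀ (by positivity)]
    nlinarith [phi_pos t, sq_nonneg t, sq_nonneg (t-1)]
  have h2 : ∀ᶠ t : ℝ in atTop, gg t ≤ 0 := by
    filter_upwards [eventually_ge_atTop (0:ℝ)] with t ht
    unfold gg
    simp only [neg_nonpos]
    exact div_nonneg (mul_nonneg ht (phi_pos t).le) (by positivity)
  exact tendsto_of_tendsto_of_tendsto_of_le_of_le' neg_phi_tendsto tendsto_const_nhds h1 h2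

lemma ww_nonneg {t : ℝ} (ht : 1 ≤ t) : 0 ≤ ww t := by
  unfold ww
  have := phi_pos t
  have h : 0 ≤ t^4 + 2*t^2 - 1 := by nlinarith
  positivity

lemma ww_le_phi (t : ℝ) : ww t ≤ phi t := by
  unfold ww
  rw [div_le_iff₀ (by positivity)]
  nlinarith [phi_pos t, sq_nonneg t, sq_nonneg (t^2)]

/-- Lower Gaussian tail bound, for x ≥ 1. -/
lemma tail_lower {x : ℝ} (hx : 1 ≤ x) : x * phi x / (1 + x^2) ≤ 1 - Phi x := by
  have hval : ∫ t in Ioi x, ww t = 0 - gg x :=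
    integral_Ioi_of_hasDerivAt_of_nonneg' (fun t ht => gg_hasDerivAt t)
      (fun t ht => ww_nonneg (hx.trans (le_of_lt ht))) gg_tendsto
  have hint : IntegrableOn ww (Ioi x) :=
    integrableOn_Ioi_deriv_of_nonneg' (fun t ht => gg_hasDerivAt t)
      (fun t ht => ww_nonneg (hx.trans (le_of_lt ht))) gg_tendsto
  have hmono : ∫ t in Ioi x, ww t ≤ ∫ t in Ioi x, phi t :=
    setIntegral_mono_on hint phi_integrable.integrableOn measurableSet_Ioi
      (fun t _ => ww_le_phi t)
  rw [one_sub_Phi]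
  have heq : 0 - gg x = x * phi x / (1 + x^2) := by unfold gg; ring
  rw [heq] at hval
  linarith

lemma phi_anti {a b : ℝ} (ha : 0 ≤ a) (hab : a ≤ b) : phi b ≤ phi a := by
  unfold phi
  exact mul_le_mul_of_nonneg_left (Real.exp_le_exp.2 (by nlinarith)) (by positivity)

lemma key1 {c u ε : ℝ} (hc : 1 ≤ c) (hPhi : Phi c = 1 - u) (hε0 : 0 ≤ ε) (hε1 : ε ≤ 1) :
    Phi c - Phi (c * Real.sqrt (1 - ε)) ≤ u * ((1 + c^2) * ε * Real.exp (c^2 * ε / 2)) := by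
  have hu0 : 0 < u := by have := Phi_lt_one c; linarith
  set s := Real.sqrt (1 - ε) with hs
  have hs0 : 0 ≤ s := Real.sqrt_nonneg _
  have hs1 : s ≤ 1 := Real.sqrt_le_one.2 (by linarith)
  have hs_sq : s^2 = 1 - ε := Real.sq_sqrt (by linarith)
  have hcs_le : c * s ≤ c := by nlinarith
  have hcs0 : 0 ≤ c * s := by positivity
  have hE : Phi c - Phi (c*s) ≤ phi (c*s) * (c - c*s) := by
    rw [Phi_sub_eq (c*s) c hcs_le]
    have h := intervalIntegral.norm_integral_le_of_norm_le_const
      (C := phi (c*s)) (a := c*s) (b := c) (f := phi) ?_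
    · rw [Real.norm_eq_abs, abs_of_nonneg (by linarith : (0:ℝ) ≤ c - c*s)] at h
      calc (∫ t in (c*s)..c, phi t) ≤ |∫ t in (c*s)..c, phi t| := le_abs_self _
        _ ≤ phi (c*s) * (c - c*s) := by rw [abs_le] at h ⊢; exact h
    · intro x hx
      rw [Set.uIoc_of_le hcs_le] at hx
      rw [Real.norm_eq_abs, abs_of_nonneg (phi_pos x).le]
      exact phi_anti hcs0 hx.1.le
  have hphics : phi (c*s) = phi c * Real.exp (c^2 * ε / 2) := by
    unfold phi
    rw [mul_assoc, ← Real.exp_add]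
    congr 2
    rw [mul_pow, hs_sq]; ring
  have h1s : 1 - s ≤ ε := by
    have : (1 - ε) ≤ s := Real.le_sqrt_of_sq_le (by nlinarith)
    linarith
  have h_tail : c * phi c ≤ u * (1 + c^2) := by
    have h := tail_lower hc
    rw [hPhi] at h
    rw [div_le_iff₀ (by positivity)] at h
    linarith
  calc Phi c - Phi (c*s) ≤ phi (c*s) * (c - c*s) := hE
    _ = (c * phi c) * (1 - s) * Real.exp (c^2 * ε / 2) := by rw [hphics]; ring
    _ ≤ (u * (1 + c^2)) * ε * Real.exp (c^2 * ε / 2) := by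
        apply mul_le_mul_of_nonneg_right ?_ (Real.exp_nonneg _)
        apply mul_le_mul h_tail h1s (by linarith) (by positivity)
    _ = u * ((1 + c^2) * ε * Real.exp (c^2 * ε / 2)) := by ring

lemma key2 {c u : ℝ} (hc : 1 ≤ c) (hPhi : Phi c = 1 - u) : c^2 ≤ -2 * Real.log u := by
  have hu0 : 0 < u := by have := Phi_lt_one c; linarith
  have hc0 : (0:ℝ) < c := lt_of_lt_of_le one_pos hc
  have h1 : u ≤ phi c / c := by
    have := tail_upper hc0
    rw [hPhi] at this; linarith
  have h2 : phi c / c ≤ Real.exp (-c^2/2) := by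
    unfold phi
    have hs : 1 ≤ Real.sqrt (2*Real.pi) := by
      rw [show (1:ℝ) = Real.sqrt 1 from (Real.sqrt_one).symm]
      apply Real.sqrt_le_sqrt
      nlinarith [Real.pi_gt_three]
    rw [div_le_iff₀ hc0]
    have hinv : (Real.sqrt (2*Real.pi))⁻¹ ≤ 1 := by
      rw [inv_le_one_iff₀]; right; exact hs
    nlinarith [Real.exp_pos (-c^2/2)]
  have h3 : u ≤ Real.exp (-c^2/2) := h1.trans h2
  have h4 := Real.log_le_log hu0 h3
  rw [Real.log_exp] at h4
  linarith

section Aux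
variable (α : ℝ) (p : ℕ → ℕ)

noncomputable def useq (n : ℕ) : ℝ := 0.5 * (1 - (1 - α) ^ ((1 : ℝ) / (p n : ℝ)))
noncomputable def cseq (n : ℕ) : ℝ := PhiInv (1 - useq α p n)
noncomputable def eseq (n : ℕ) : ℝ := (useq α p n) ^ ((8:ℝ)⁻¹)

variable {α p}
variable (hα0 : 0 < α) (hα1 : α < 1) (hptop : Tendsto p atTop atTop)

lemma hPtop' (hptop : Tendsto p atTop atTop) :
    Tendsto (fun n => (p n : ℝ)) atTop atTop :=
  tendsto_natCast_atTop_atTop.comp hptop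

include hα0 hα1 in
lemma useq_exp (n : ℕ) : useq α p n = 0.5 * (1 - Real.exp (Real.log (1 - α) / (p n : ℝ))) := by
  unfold useq
  rw [Real.rpow_def_of_pos (by linarith), mul_one_div]

include hα0 hα1 in
lemma useq_pos {n : ℕ} (hn : 1 ≤ (p n : ℝ)) : 0 < useq α p n ∧ useq α p n < 1/2 := by
  rw [useq_exp hα0 hα1]
  have ht : Real.log (1 - α) < 0 := Real.log_neg (by linarith) (by linarith)
  have h1 : Real.log (1 - α) / (p n : ℝ) < 0 := div_neg_of_neg_of_pos ht (by linarith)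
  have h2 : Real.exp (Real.log (1 - α) / (p n : ℝ)) < 1 := by
    have h := Real.exp_lt_exp.2 h1
    rwa [Real.exp_zero] at h
  have h3 := Real.exp_pos (Real.log (1 - α) / (p n : ℝ))
  constructor <;> [nlinarith; nlinarith]

include hα0 hα1 hptop in
lemma useq_tendsto : Tendsto (useq α p) atTop (nhds 0) := by
  have hinv : Tendsto (fun n => ((p n : ℝ))⁻¹) atTop (nhds 0) :=
    (hPtop' hptop).inv_tendsto_atTop
  have hq : Tendsto (fun n => Real.log (1 - α) / (p n : ℝ)) atTop (nhds 0) := by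
    simpa [div_eq_mul_inv] using hinv.const_mul (Real.log (1 - α))
  have := ((Real.continuous_exp.tendsto 0).comp hq).const_sub 1
  have h2 := this.const_mul (0.5 : ℝ)
  simp only [Real.exp_zero, sub_self, mul_zero] at h2
  exact h2.congr fun n => (useq_exp hα0 hα1 n).symm

include hα0 hα1 hptop in
lemma A_tendsto :
    Tendsto (fun n => 2 * (p n : ℝ) * useq α p n) atTop (nhds (-Real.log (1 - α))) := by
  set t := Real.log (1 - α) with htdef
  have ht : t < 0 := Real.log_neg (by linarith) (by linarith)
  have hinv : Tendsto (fun n => ((p n : ℝ))⁻¹) atTop (nhds 0) :=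
    (hPtop' hptop).inv_tendsto_atTop
  have hq : Tendsto (fun n => t / (p n : ℝ)) atTop (nhds 0) := by
    simpa [div_eq_mul_inv] using hinv.const_mul t
  have hlow : Tendsto (fun n => -t / (1 - t / (p n : ℝ))) atTop (nhds (-t)) := by
    have hden : Tendsto (fun n => 1 - t / (p n : ℝ)) atTop (nhds 1) := by
      simpa using (hq.const_sub 1)
    have := (tendsto_const_nhds (x := -t)).div hden one_ne_zero
    rw [div_one] at this; exact this
  have hP1 := (hPtop' hptop).eventually_ge_atTop 1
  apply tendsto_of_tendsto_of_tendsto_of_le_of_le' hlow tendsto_const_nhds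
  · filter_upwards [hP1] with n hn
    have hP0 : (0:ℝ) < (p n : ℝ) := by linarith
    have hx : t / (p n : ℝ) < 0 := div_neg_of_neg_of_pos ht hP0
    have hd : (0:ℝ) < 1 - t / (p n : ℝ) := by linarith
    have e1 : 1 - t / (p n : ℝ) ≤ Real.exp (-(t / (p n : ℝ))) := by
      linarith [Real.add_one_le_exp (-(t / (p n : ℝ)))]
    have e2 : Real.exp (t / (p n : ℝ)) ≤ (1 - t / (p n : ℝ))⁻¹ := by
      have h := inv_anti₀ hd e1
      rwa [← Real.exp_neg, neg_neg] at h
    rw [useq_exp hα0 hα1]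
    rw [div_le_iff₀ hd]
    have hE : Real.exp (t / (p n : ℝ)) * (1 - t / (p n : ℝ)) ≤ 1 := by
      have h := mul_le_mul_of_nonneg_right e2 hd.le
      rwa [inv_mul_cancel₀ (ne_of_gt hd)] at h
    have hPx : (p n : ℝ) * (t / (p n : ℝ)) = t := by field_simp
    nlinarith [mul_le_mul_of_nonneg_left hE hP0.le]
  · filter_upwards [hP1] with n hn
    have hP0 : (0:ℝ) < (p n : ℝ) := by linarith
    have h1 : 1 - Real.exp (t / (p n : ℝ)) ≤ -(t / (p n : ℝ)) := by
      linarith [Real.add_one_le_exp (t / (p n : ℝ))]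
    have h2 : (p n : ℝ) * (1 - Real.exp (t / (p n : ℝ))) ≤ (p n : ℝ) * (-(t / (p n : ℝ))) :=
      mul_le_mul_of_nonneg_left h1 (by linarith)
    have h3 : (p n : ℝ) * (-(t / (p n : ℝ))) = -t := by field_simp [mul_comm]
    rw [useq_exp hα0 hα1]
    calc 2 * (p n : ℝ) * (0.5 * (1 - Real.exp (t / (p n : ℝ))))
        = (p n : ℝ) * (1 - Real.exp (t / (p n : ℝ))) := by ring
      _ ≤ -t := by linarith

include hα0 hα1 hptop in
lemma cseq_spec : ∀ᶠ n in atTop, Phi (cseq α p n) = 1 - useq α p n := by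
  filter_upwards [(hPtop' hptop).eventually_ge_atTop 1] with n hn
  obtain ⟨h1, h2⟩ := useq_pos hα0 hα1 hn
  exact PhiInv_spec (by linarith) (by linarith)

include hα0 hα1 hptop in
lemma cseq_ge_one : ∀ᶠ n in atTop, 1 ≤ cseq α p n := by
  have hq1 : (0:ℝ) < 1 - Phi 1 := by linarith [Phi_lt_one 1]
  filter_upwards [cseq_spec hα0 hα1 hptop,
    (useq_tendsto hα0 hα1 hptop).eventually (eventually_lt_nhds hq1)] with n h1 h2
  have : Phi 1 < Phi (cseq α p n) := by rw [h1]; linarith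
  exact (Phi_strictMono.lt_iff_lt.1 this).le

include hα0 hα1 hptop in
lemma eseq_tendsto : Tendsto (eseq α p) atTop (nhds 0) := by
  have hc : ContinuousAt (fun x : ℝ => x ^ ((8:ℝ)⁻¹)) 0 :=
    Real.continuousAt_rpow_const 0 _ (Or.inr (by norm_num))
  have := hc.tendsto.comp (useq_tendsto hα0 hα1 hptop)
  exact (by simpa [eseq, Function.comp_def, Real.zero_rpow (by norm_num : ((8:ℝ)⁻¹) ≠ 0)] using this :
    Tendsto (fun n => useq α p n ^ (8:ℝ)⁻¹) atTop (nhds 0))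

include hα0 hα1 hptop in
lemma csq_eps_tendsto :
    Tendsto (fun n => (cseq α p n)^2 * eseq α p n) atTop (nhds 0) := by
  have hu_within : Tendsto (useq α p) atTop (nhdsWithin 0 (Set.Ioi 0)) := by
    rw [tendsto_nhdsWithin_iff]
    refine ⟨useq_tendsto hα0 hα1 hptop, ?_⟩
    filter_upwards [(hPtop' hptop).eventually_ge_atTop 1] with n hn
    exact (useq_pos hα0 hα1 hn).1
  have hlm := (tendsto_log_mul_rpow_nhdsGT_zero
    (by norm_num : (0:ℝ) < (8:ℝ)⁻¹)).comp hu_within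
  have hR : Tendsto (fun n => -2 * (Real.log (useq α p n) * (useq α p n) ^ ((8:ℝ)⁻¹)))
      atTop (nhds 0) := by
    have := hlm.const_mul (-2 : ℝ)
    simpa [Function.comp] using this
  apply tendsto_of_tendsto_of_tendsto_of_le_of_le' tendsto_const_nhds hR
  · filter_upwards [(hPtop' hptop).eventually_ge_atTop 1] with n hn
    have hu := (useq_pos hα0 hα1 hn).1
    have : 0 ≤ eseq α p n := Real.rpow_nonneg hu.le _
    positivity
  · filter_upwards [cseq_spec hα0 hα1 hptop, cseq_ge_one hα0 hα1 hptop,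
      (hPtop' hptop).eventually_ge_atTop 1] with n h1 h2 hn
    have hu := (useq_pos hα0 hα1 hn).1
    have hε0 : 0 ≤ eseq α p n := Real.rpow_nonneg hu.le _
    have hkey := key2 h2 h1
    calc (cseq α p n)^2 * eseq α p n ≤ (-2 * Real.log (useq α p n)) * eseq α p n :=
          mul_le_mul_of_nonneg_right hkey hε0
      _ = -2 * (Real.log (useq α p n) * (useq α p n) ^ ((8:ℝ)⁻¹)) := by
          unfold eseq; ring

include hα0 hα1 hptop in
lemma B_tendsto :
    Tendsto (fun n => 2 * (p n : ℝ) *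
      (Phi (cseq α p n) - Phi (cseq α p n * Real.sqrt (1 - eseq α p n)))) atTop (nhds 0) := by
  have hε0 : ∀ᶠ n in atTop, 0 ≤ eseq α p n := by
    filter_upwards [(hPtop' hptop).eventually_ge_atTop 1] with n hn
    exact Real.rpow_nonneg (useq_pos hα0 hα1 hn).1.le _
  have hε1 : ∀ᶠ n in atTop, eseq α p n ≤ 1 := by
    filter_upwards [(eseq_tendsto hα0 hα1 hptop).eventually
      (eventually_lt_nhds one_pos)] with n hn
    exact hn.le
  have h2nd : Tendsto (fun n => (1 + (cseq α p n)^2) * eseq α p n *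
      Real.exp ((cseq α p n)^2 * eseq α p n / 2)) atTop (nhds 0) := by
    have hsum : Tendsto (fun n => eseq α p n + (cseq α p n)^2 * eseq α p n) atTop (nhds 0) := by
      have := (eseq_tendsto hα0 hα1 hptop).add (csq_eps_tendsto hα0 hα1 hptop)
      simpa using this
    have hfac : Tendsto (fun n => (1 + (cseq α p n)^2) * eseq α p n) atTop (nhds 0) :=
      hsum.congr (fun n => by ring)
    have hexp : Tendsto (fun n => Real.exp ((cseq α p n)^2 * eseq α p n / 2)) atTop (nhds 1) := by
      have h := (csq_eps_tendsto hα0 hα1 hptop).div_const 2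
      have := (Real.continuous_exp.tendsto 0).comp (by simpa using h)
      simpa [Function.comp_def] using this
    have := hfac.mul hexp
    simpa using this
  have hX := (A_tendsto hα0 hα1 hptop).mul h2nd
  rw [mul_zero] at hX
  apply tendsto_of_tendsto_of_tendsto_of_le_of_le' tendsto_const_nhds hX
  · filter_upwards [cseq_ge_one hα0 hα1 hptop, hε0] with n h1 h2
    have hc0 : (0:ℝ) ≤ cseq α p n := by linarith
    have hs1 : Real.sqrt (1 - eseq α p n) ≤ 1 := Real.sqrt_le_one.2 (by linarith)
    have : cseq α p n * Real.sqrt (1 - eseq α p n) ≤ cseq α p n :=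
      mul_le_of_le_one_right hc0 hs1
    have hmono := Phi_strictMono.monotone this
    have hP0 : (0:ℝ) ≤ (p n : ℝ) := Nat.cast_nonneg _
    nlinarith
  · filter_upwards [cseq_ge_one hα0 hα1 hptop, cseq_spec hα0 hα1 hptop, hε0, hε1] with n h1 h2 h3 h4
    have hkey := key1 h1 h2 h3 h4
    have hP0 : (0:ℝ) ≤ 2 * (p n : ℝ) := by positivity
    calc 2 * (p n : ℝ) * (Phi (cseq α p n) - Phi (cseq α p n * Real.sqrt (1 - eseq α p n)))
        ≤ 2 * (p n : ℝ) * (useq α p n * ((1 + (cseq α p n)^2) * eseq α p n *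
            Real.exp ((cseq α p n)^2 * eseq α p n / 2))) :=
          mul_le_mul_of_nonneg_left hkey hP0
      _ = 2 * (p n : ℝ) * useq α p n * ((1 + (cseq α p n)^2) * eseq α p n *
            Real.exp ((cseq α p n)^2 * eseq α p n / 2)) := by ring
end Aux

theorem stmt4 (α δ C : ℝ) (hα0 : 0 < α) (hα1 : α < 1) (hδ : 0 < δ) (hC : 0 < C)
    (p : ℕ → ℕ) (hptop : Tendsto p atTop atTop)
    (hpC : ∀ n : ℕ, (p n : ℝ) ≤ C * (n : ℝ) ^ (2 - δ)) :
    Tendsto (fun n : ℕ =>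
        2 * (p n : ℝ) *
          (1 - Phi (PhiInv (1 - 0.5 * (1 - (1 - α) ^ ((1 : ℝ) / (p n : ℝ))))
            * Real.sqrt (1 - (0.5 * (1 - (1 - α) ^ ((1 : ℝ) / (p n : ℝ)))) ^ (8⁻¹ : ℝ)))))
      atTop (nhds (-Real.log (1 - α))) := by
  have hsum := (A_tendsto hα0 hα1 hptop).add (B_tendsto hα0 hα1 hptop)
  rw [add_zero] at hsum
  apply Filter.Tendsto.congr' ?_ hsum
  filter_upwards [cseq_spec hα0 hα1 hptop] with n h1
  simp only [useq, cseq, eseq] at h1 ⊢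
  rw [h1]
  ring
end
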